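/- For all X, Y ∈ G_β, every 1 ≤ i ≤ N and every 1 ≤ k ≤ N, one has |Q_X(i)^k − Q_Y(i)^k| ≤ max(N⁴/β², N²/β)·‖X − Y‖₁; that is, X ↦ Q_X(i)^k is Lipschitz on G_β with a constant independent of i and k. -/
import Mathlib


/-- `m_X = ∑_{k=1}^N X(k)`. -/
noncomputable def mS (N : ℕ) (X : ℕ → ℝ) : ℝ := ∑ k ∈ Finset.Icc 1 N, X k

/-- `M_X = ∑_{k=1}^N k·X(k)`. -/
noncomputable def MS (N : ℕ) (X : ℕ → ℝ) : ℝ := ∑ k ∈ Finset.Icc 1 N, (k : ℝ) * X k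

/-- `Q_X(i) = (1/M_X)·∑_{k=i}^N k·X(k)`. -/
noncomputable def QS (N : ℕ) (X : ℕ → ℝ) (i : ℕ) : ℝ :=
  (∑ k ∈ Finset.Icc i N, (k : ℝ) * X k) / MS N X

/-- The 1-norm `‖X − Y‖₁ = ∑_{k=0}^N |X(k) − Y(k)|`. -/
noncomputable def norm1 (N : ℕ) (X Y : ℕ → ℝ) : ℝ :=
  ∑ k ∈ Finset.range (N + 1), |X k - Y k|

/-- Membership in the cube `[0,1]^{N+1}`. -/
def cube (N : ℕ) (X : ℕ → ℝ) : Prop := ∀ k ≤ N, 0 ≤ X k ∧ X k ≤ 1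

/-- `G_β = {X ∈ [0,1]^{N+1} : m_X ≥ β}`. -/
def Gset (N : ℕ) (β : ℝ) (X : ℕ → ℝ) : Prop := cube N X ∧ β ≤ mS N X

lemma pow_lip (a b : ℝ) (ha0 : 0 ≤ a) (ha1 : a ≤ 1) (hb0 : 0 ≤ b) (hb1 : b ≤ 1) (k : ℕ) :
    |a ^ k - b ^ k| ≤ k * |a - b| := by
  induction k with
  | zero => simp
  | succ n ih =>
    have h1 : a ^ (n+1) - b ^ (n+1) = a * (a ^ n - b ^ n) + b ^ n * (a - b) := by ring
    have hbn : b ^ n ≤ 1 := pow_le_one₀ hb0 hb1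
    have hbn0 : (0:ℝ) ≤ b ^ n := pow_nonneg hb0 n
    have h2 : a * |a ^ n - b ^ n| ≤ n * |a - b| := by
      calc a * |a ^ n - b ^ n| ≤ 1 * |a ^ n - b ^ n| :=
            mul_le_mul_of_nonneg_right ha1 (abs_nonneg _)
        _ = |a ^ n - b ^ n| := one_mul _
        _ ≤ n * |a - b| := ih
    have h3 : b ^ n * |a - b| ≤ |a - b| := by
      calc b ^ n * |a - b| ≤ 1 * |a - b| := mul_le_mul_of_nonneg_right hbn (abs_nonneg _)
        _ = |a - b| := one_mul _
    calc |a ^ (n+1) - b ^ (n+1)| ≤ |a * (a ^ n - b ^ n)| + |b ^ n * (a - b)| := by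
          rw [h1]; exact abs_add_le _ _
      _ = a * |a ^ n - b ^ n| + b ^ n * |a - b| := by
          rw [abs_mul, abs_mul, abs_of_nonneg ha0, abs_of_nonneg hbn0]
      _ ≤ n * |a - b| + |a - b| := add_le_add h2 h3
      _ = (n + 1 : ℕ) * |a - b| := by push_cast; ring


lemma const_ineq (n β : ℝ) (hn : 2 ≤ n) (hβ0 : 0 < β) (hβ1 : β < 1) :
    2 * n ^ 2 / β ≤ n ^ 4 / β ^ 2 := by
  rw [div_le_div_iff₀ hβ0 (by positivity)]
  have h1 : β ^ 2 ≤ β := by nlinarith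
  have h2 : 2 * n ^ 2 ≤ n ^ 4 := by nlinarith [sq_nonneg (n ^ 2 - 2)]
  nlinarith [mul_le_mul_of_nonneg_left h1 (show (0:ℝ) ≤ 2 * n ^ 2 by positivity),
    mul_le_mul_of_nonneg_right h2 hβ0.le]

lemma beta_le_MS (N : ℕ) (β : ℝ) (X : ℕ → ℝ) (hX : Gset N β X) : β ≤ MS N X := by
  refine hX.2.trans (Finset.sum_le_sum fun j hj => ?_)
  rw [Finset.mem_Icc] at hj
  have h0 := (hX.1 j hj.2).1
  have h1 : (1:ℝ) ≤ (j:ℝ) := by exact_mod_cast hj.1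
  nlinarith

lemma S_nonneg (N i : ℕ) (β : ℝ) (X : ℕ → ℝ) (hX : Gset N β X) :
    0 ≤ ∑ k ∈ Finset.Icc i N, (k : ℝ) * X k := by
  refine Finset.sum_nonneg fun j hj => ?_
  rw [Finset.mem_Icc] at hj
  exact mul_nonneg (Nat.cast_nonneg j) (hX.1 j hj.2).1

lemma S_le_MS (N i : ℕ) (hi : 1 ≤ i) (β : ℝ) (X : ℕ → ℝ) (hX : Gset N β X) :
    ∑ k ∈ Finset.Icc i N, (k : ℝ) * X k ≤ MS N X := by
  refine Finset.sum_le_sum_of_subset_of_nonneg ?_ fun j hj _ => ?_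
  · exact Finset.Icc_subset_Icc_left hi
  · rw [Finset.mem_Icc] at hj
    exact mul_nonneg (Nat.cast_nonneg j) (hX.1 j hj.2).1

lemma Sdiff_le (N i : ℕ) (X Y : ℕ → ℝ) :
    |(∑ k ∈ Finset.Icc i N, (k : ℝ) * X k) - ∑ k ∈ Finset.Icc i N, (k : ℝ) * Y k|
      ≤ N * norm1 N X Y := by
  rw [← Finset.sum_sub_distrib]
  calc |∑ k ∈ Finset.Icc i N, ((k : ℝ) * X k - (k : ℝ) * Y k)|
      ≤ ∑ k ∈ Finset.Icc i N, |(k : ℝ) * X k - (k : ℝ) * Y k| := Finset.abs_sum_le_sum_abs _ _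
    _ ≤ ∑ k ∈ Finset.Icc i N, (N : ℝ) * |X k - Y k| := by
        refine Finset.sum_le_sum fun j hj => ?_
        rw [Finset.mem_Icc] at hj
        rw [← mul_sub, abs_mul, abs_of_nonneg (Nat.cast_nonneg (α := ℝ) j)]
        exact mul_le_mul_of_nonneg_right (by exact_mod_cast hj.2) (abs_nonneg _)
    _ ≤ ∑ k ∈ Finset.range (N+1), (N : ℝ) * |X k - Y k| := by
        refine Finset.sum_le_sum_of_subset_of_nonneg ?_ fun j _ _ => ?_
        · intro j hj
          rw [Finset.mem_Icc] at hj
          rw [Finset.mem_range]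
          omega
        · positivity
    _ = N * norm1 N X Y := by rw [norm1, Finset.mul_sum]

/-- For all `X, Y ∈ G_β`, all `1 ≤ i ≤ N` and all `1 ≤ k ≤ N`,
`|Q_X(i)^k − Q_Y(i)^k| ≤ max(N⁴/β², N²/β)·‖X − Y‖₁`: `X ↦ Q_X(i)^k` is Lipschitz
on `G_β` with a constant independent of `i` and `k`. -/
theorem QS_pow_lipschitz (N : ℕ) (hN : 1 ≤ N) (β : ℝ) (hβ0 : 0 < β) (hβ1 : β < 1)
    (X Y : ℕ → ℝ) (hX : Gset N β X) (hY : Gset N β Y)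
    (i : ℕ) (hi1 : 1 ≤ i) (hiN : i ≤ N) (k : ℕ) (hk1 : 1 ≤ k) (hkN : k ≤ N) :
    |QS N X i ^ k - QS N Y i ^ k| ≤
      max ((N : ℝ) ^ 4 / β ^ 2) ((N : ℝ) ^ 2 / β) * norm1 N X Y := by
  have hL0 : 0 ≤ norm1 N X Y := Finset.sum_nonneg fun j _ => abs_nonneg _
  have hMX : 0 < MS N X := lt_of_lt_of_le hβ0 (beta_le_MS N β X hX)
  have hMY : 0 < MS N Y := lt_of_lt_of_le hβ0 (beta_le_MS N β Y hY)
  have hmax0 : 0 ≤ max ((N : ℝ) ^ 4 / β ^ 2) ((N : ℝ) ^ 2 / β) :=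
    le_max_iff.mpr (Or.inl (by positivity))
  by_cases hi : i = 1
  · subst hi
    have hQX : QS N X 1 = 1 := div_self (ne_of_gt hMX)
    have hQY : QS N Y 1 = 1 := div_self (ne_of_gt hMY)
    rw [hQX, hQY, sub_self, abs_zero]
    exact mul_nonneg hmax0 hL0
  · have hN2 : (2:ℝ) ≤ (N:ℝ) := by
      have : 2 ≤ N := by omega
      exact_mod_cast this
    set SX := ∑ j ∈ Finset.Icc i N, (j : ℝ) * X j with hSX
    set SY := ∑ j ∈ Finset.Icc i N, (j : ℝ) * Y j with hSY
    have hSX0 : 0 ≤ SX := S_nonneg N i β X hX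
    have hSY0 : 0 ≤ SY := S_nonneg N i β Y hY
    have hSXM : SX ≤ MS N X := S_le_MS N i hi1 β X hX
    have hSYM : SY ≤ MS N Y := S_le_MS N i hi1 β Y hY
    have hQX0 : 0 ≤ QS N X i := div_nonneg hSX0 hMX.le
    have hQX1 : QS N X i ≤ 1 := (div_le_one hMX).mpr hSXM
    have hQY0 : 0 ≤ QS N Y i := div_nonneg hSY0 hMY.le
    have hQY1 : QS N Y i ≤ 1 := (div_le_one hMY).mpr hSYM
    have key : QS N X i - QS N Y i
        = (SX - SY) / MS N X + (SY / MS N Y) * ((MS N Y - MS N X) / MS N X) := by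
      rw [QS, QS, ← hSX, ← hSY]
      field_simp
      ring
    have hβX : β ≤ MS N X := beta_le_MS N β X hX
    have hb1 : |SX - SY| / MS N X ≤ N * norm1 N X Y / β :=
      div_le_div₀ (by positivity) (Sdiff_le N i X Y) hβ0 hβX
    have hMdiff : |MS N Y - MS N X| ≤ N * norm1 N X Y := by
      rw [abs_sub_comm]
      exact Sdiff_le N 1 X Y
    have hb2 : (SY / MS N Y) * (|MS N Y - MS N X| / MS N X) ≤ 1 * (N * norm1 N X Y / β) := by
      refine mul_le_mul hQY1 (div_le_div₀ (by positivity) hMdiff hβ0 hβX) (by positivity) zero_le_one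
    have hQdiff : |QS N X i - QS N Y i| ≤ 2 * N * norm1 N X Y / β := by
      rw [key]
      calc |(SX - SY) / MS N X + (SY / MS N Y) * ((MS N Y - MS N X) / MS N X)|
          ≤ |(SX - SY) / MS N X| + |(SY / MS N Y) * ((MS N Y - MS N X) / MS N X)| :=
            abs_add_le _ _
        _ = |SX - SY| / MS N X + (SY / MS N Y) * (|MS N Y - MS N X| / MS N X) := by
            rw [abs_div, abs_mul, abs_div, abs_div, abs_of_pos hMX, abs_of_pos hMY,
              abs_of_nonneg hSY0]
        _ ≤ N * norm1 N X Y / β + 1 * (N * norm1 N X Y / β) := add_le_add hb1 hb2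
        _ = 2 * N * norm1 N X Y / β := by ring
    have hkpow : |QS N X i ^ k - QS N Y i ^ k| ≤ k * |QS N X i - QS N Y i| :=
      pow_lip _ _ hQX0 hQX1 hQY0 hQY1 k
    have hkN' : (k:ℝ) ≤ (N:ℝ) := by exact_mod_cast hkN
    have hconst : 2 * (N:ℝ)^2 / β ≤ (N:ℝ)^4 / β^2 := const_ineq (N:ℝ) β hN2 hβ0 hβ1
    calc |QS N X i ^ k - QS N Y i ^ k| ≤ k * |QS N X i - QS N Y i| := hkpow
      _ ≤ k * (2 * N * norm1 N X Y / β) :=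
          mul_le_mul_of_nonneg_left hQdiff (Nat.cast_nonneg k)
      _ ≤ N * (2 * N * norm1 N X Y / β) :=
          mul_le_mul_of_nonneg_right hkN' (by positivity)
      _ = (2 * (N:ℝ)^2 / β) * norm1 N X Y := by ring
      _ ≤ ((N:ℝ)^4 / β^2) * norm1 N X Y := mul_le_mul_of_nonneg_right hconst hL0
      _ ≤ max ((N : ℝ) ^ 4 / β ^ 2) ((N : ℝ) ^ 2 / β) * norm1 N X Y :=
          mul_le_mul_of_nonneg_right (le_max_left _ _) hL0
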